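/- Let G be a compact topological group equipped with its Haar probability measure dg, and let (ρ, V) and (ρ', V') be two continuous finite-dimensional irreducible unitary representations of G that are not equivalent (i.e., there is no linear isomorphism A : V → V' with A ∘ ρ(g) = ρ'(g) ∘ A for all g ∈ G). Then for all vectors u, v ∈ V and u', v' ∈ V', ∫_G ⟨ρ(g)u, v⟩ · conj(⟨ρ'(g)u', v'⟩) dg = 0. -/

import Mathlib

open MeasureTheory

/-- **Schur's orthogonality relations II.**
If `ρ` and `ρ'` are two continuous finite-dimensional irreducible unitary representations of a
compact topological group `G` (with Haar probability measure `μ`) that are not equivalent, then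
their matrix coefficients are orthogonal in `L²(G)`:
`∫_G ⟨ρ(g)u, v⟩ · conj ⟨ρ'(g)u', v'⟩ dg = 0`. -/
theorem schur_orthogonality_relations_II
    {G : Type*} [Group G] [TopologicalSpace G] [IsTopologicalGroup G] [CompactSpace G]
    [MeasurableSpace G] [BorelSpace G]
    (μ : Measure G) [μ.IsHaarMeasure] [IsProbabilityMeasure μ]
    {V : Type*} [NormedAddCommGroup V] [InnerProductSpace ℂ V] [FiniteDimensional ℂ V]
    {V' : Type*} [NormedAddCommGroup V'] [InnerProductSpace ℂ V'] [FiniteDimensional ℂ V']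
    (ρ : G →* (V ≃ₗᵢ[ℂ] V)) (ρ' : G →* (V' ≃ₗᵢ[ℂ] V'))
    (hcont : ∀ v : V, Continuous fun g : G => ρ g v)
    (hcont' : ∀ v : V', Continuous fun g : G => ρ' g v)
    (hirr : ∀ W : Submodule ℂ V, (∀ g : G, ∀ v ∈ W, ρ g v ∈ W) → W = ⊥ ∨ W = ⊤)
    (hirr' : ∀ W : Submodule ℂ V', (∀ g : G, ∀ v ∈ W, ρ' g v ∈ W) → W = ⊥ ∨ W = ⊤)
    (hneq : ¬ ∃ A : V ≃ₗ[ℂ] V', ∀ (g : G) (x : V), A (ρ g x) = ρ' g (A x))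
    (u v : V) (u' v' : V') :
    ∫ g : G, (inner ℂ (ρ g u) v : ℂ) * (starRingEnd ℂ) (inner ℂ (ρ' g u') v') ∂μ = 0 := by
  classical
  -- Haar measure on a compact group is right invariant
  have hri : μ.IsMulRightInvariant := by
    constructor
    intro h
    have : IsProbabilityMeasure (Measure.map (· * h) μ) :=
      Measure.isProbabilityMeasure_map (measurable_mul_const h).aemeasurable
    exact Measure.isHaarMeasure_eq_of_isProbabilityMeasure _ μ
  -- continuity of g ↦ (ρ g).symm w
  have hsymm_eq : ∀ (g : G) (w : V), (ρ g).symm w = ρ g⁻¹ w := by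
    intro g w
    rw [map_inv]
    rfl
  have hcont_symm : ∀ w : V, Continuous fun g : G => (ρ g).symm w := by
    intro w
    simp only [hsymm_eq]
    exact (hcont w).comp continuous_inv
  -- the integrand for the intertwiner
  set Φ : V' → G → V := fun x' g => (inner ℂ v' (ρ' g x') : ℂ) • (ρ g).symm v with hΦ
  have hΦcont : ∀ x', Continuous (Φ x') := by
    intro x'
    exact (Continuous.inner continuous_const (hcont' x')).smul (hcont_symm v)
  have hΦint : ∀ x', Integrable (Φ x') μ := fun x' =>
    (hΦcont x').integrable_of_hasCompactSupport (isClosed_tsupport _).isCompact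
  -- the intertwining operator
  set T : V' →ₗ[ℂ] V :=
    { toFun := fun x' => ∫ g, Φ x' g ∂μ
      map_add' := by
        intro x y
        show (∫ g, Φ (x + y) g ∂μ) = (∫ g, Φ x g ∂μ) + ∫ g, Φ y g ∂μ
        rw [← integral_add (hΦint x) (hΦint y)]
        congr 1
        funext g
        simp only [hΦ, map_add, inner_add_right, add_smul]
      map_smul' := by
        intro c x
        show (∫ g, Φ (c • x) g ∂μ) = c • ∫ g, Φ x g ∂μ
        rw [← integral_smul]
        congr 1
        funext g
        simp only [hΦ, _root_.map_smul, inner_smul_right, smul_smul] } with hT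
  have hTapp : ∀ x', T x' = ∫ g, Φ x' g ∂μ := fun _ => rfl
  -- equivariance : T (ρ' h x') = ρ h (T x')
  have hequiv : ∀ (h : G) (x' : V'), T (ρ' h x') = ρ h (T x') := by
    intro h x'
    set W : G → V := fun g => (inner ℂ v' (ρ' g x') : ℂ) • (ρ (g * h⁻¹)).symm v with hW
    have step1 : T (ρ' h x') = ∫ g, W (g * h) ∂μ := by
      rw [hTapp]
      congr 1
      funext g
      simp only [hW, hΦ, mul_inv_cancel_right]
      congr 2
      rw [map_mul]
      rfl
    have step2 : (∫ g, W (g * h) ∂μ) = ∫ g, W g ∂μ :=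
      integral_mul_right_eq_self W h
    have key : ∀ g : G, (ρ (g * h⁻¹)).symm v = ρ h ((ρ g).symm v) := by
      intro g
      apply (ρ (g * h⁻¹)).injective
      rw [LinearIsometryEquiv.apply_symm_apply]
      have : (ρ (g * h⁻¹)) (ρ h ((ρ g).symm v)) = ρ (g * h⁻¹ * h) ((ρ g).symm v) := by
        conv_rhs => rw [map_mul]
        rfl
      rw [this, inv_mul_cancel_right, LinearIsometryEquiv.apply_symm_apply]
    have step3 : (∫ g, W g ∂μ) = ρ h (∫ g, Φ x' g ∂μ) := by
      set L : V →L[ℂ] V := (ρ h).toLinearIsometry.toContinuousLinearMap with hL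
      have hLapp : ∀ w : V, L w = ρ h w := fun _ => rfl
      have := L.integral_comp_comm (hΦint x')
      rw [hLapp] at this
      rw [← this]
      congr 1
      funext g
      show (inner ℂ v' (ρ' g x') : ℂ) • (ρ (g * h⁻¹)).symm v = L (Φ x' g)
      show (inner ℂ v' (ρ' g x') : ℂ) • (ρ (g * h⁻¹)).symm v
          = L ((inner ℂ v' (ρ' g x') : ℂ) • (ρ g).symm v)
      rw [key g, _root_.map_smul, hLapp]
    rw [step1, step2, step3, hTapp]
  -- Schur's lemma : T = 0
  have hT0 : T = 0 := by
    by_contra hne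
    -- kernel is invariant
    have hker : LinearMap.ker T = ⊥ := by
      rcases hirr' (LinearMap.ker T) (fun g x hx => by
        rw [LinearMap.mem_ker] at hx ⊢
        rw [hequiv, hx, map_zero]) with hk | hk
      · exact hk
      · exfalso
        apply hne
        ext x
        have : x ∈ LinearMap.ker T := hk ▸ Submodule.mem_top
        simpa using this
    have hrange : LinearMap.range T = ⊤ := by
      rcases hirr (LinearMap.range T) (fun g x hx => by
        obtain ⟨y, hy⟩ := hx
        exact ⟨ρ' g y, by rw [hequiv, hy]⟩) with hr | hr
      · exfalso
        apply hne
        ext x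
        have : T x ∈ LinearMap.range T := ⟨x, rfl⟩
        rw [hr] at this
        simpa using this
      · exact hr
    have hbij : Function.Bijective T :=
      ⟨LinearMap.ker_eq_bot.mp hker, LinearMap.range_eq_top.mp hrange⟩
    apply hneq
    set e := LinearEquiv.ofBijective T hbij with he
    refine ⟨e.symm, fun g x => ?_⟩
    apply e.injective
    rw [e.apply_symm_apply]
    have heapp : ∀ y, e y = T y := fun _ => rfl
    rw [heapp, hequiv, ← heapp, e.apply_symm_apply]
  -- conclude
  have hint : ∀ g : G,
      (inner ℂ (ρ g u) v : ℂ) * (starRingEnd ℂ) (inner ℂ (ρ' g u') v') = inner ℂ u (Φ u' g) := by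
    intro g
    rw [hΦ]
    simp only [inner_smul_right]
    rw [inner_conj_symm]
    have : (inner ℂ u ((ρ g).symm v) : ℂ) = inner ℂ (ρ g u) v := by
      conv_rhs => rw [← (ρ g).apply_symm_apply v]
      exact ((ρ g).inner_map_map u ((ρ g).symm v)).symm
    rw [this, mul_comm]
  calc ∫ g : G, (inner ℂ (ρ g u) v : ℂ) * (starRingEnd ℂ) (inner ℂ (ρ' g u') v') ∂μ
      = ∫ g, (inner ℂ u (Φ u' g) : ℂ) ∂μ := by
        congr 1; funext g; exact hint g
    _ = inner ℂ u (∫ g, Φ u' g ∂μ) := by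
        have := (innerSL ℂ u).integral_comp_comm (hΦint u')
        simpa using this
    _ = inner ℂ u (T u') := by rw [hTapp]
    _ = 0 := by rw [hT0]; simp
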